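/- Determinization preserves recursive coalgebras: given an endofunctor F : C → C and an adjunction L ⊣ R : C → D (L : D → C), if c : C → RFLC is a recursive RFL-coalgebra then its adjoint transpose c♯ : LC → FLC is a recursive F-coalgebra. -/
import Mathlib


open CategoryTheory

universe v₁ v₂ u₁ u₂

/-- Determinization preserves recursive coalgebras: given an adjunction
`L ⊣ R` and an endofunctor `F` on `C`, if `c : X ⟶ R F L X` is a recursive
`R∘F∘L`-coalgebra, then its adjoint transpose `c♯ = ε_{FLX} ∘ L c : L X ⟶ F L X`
is a recursive `F`-coalgebra. -/
theorem stmt_6 {C : Type u₁} [Category.{v₁} C] {D : Type u₂} [Category.{v₂} D]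
    (F : C ⥤ C) (L : D ⥤ C) (R : C ⥤ D) (adj : L ⊣ R)
    (X : D) (c : X ⟶ R.obj (F.obj (L.obj X)))
    (hrec : ∀ (A : D) (a : R.obj (F.obj (L.obj A)) ⟶ A),
      ∃! h : X ⟶ A, h = c ≫ R.map (F.map (L.map h)) ≫ a)
    (B : C) (b : F.obj B ⟶ B) :
    ∃! h : L.obj X ⟶ B,
      h = (L.map c ≫ adj.counit.app (F.obj (L.obj X))) ≫ F.map h ≫ b := by
  set a : R.obj (F.obj (L.obj (R.obj B))) ⟶ R.obj B :=
    R.map (F.map (adj.counit.app B) ≫ b) with ha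
  obtain ⟨h₀, hh₀, huniq⟩ := hrec (R.obj B) a
  set e := adj.homEquiv X B with he
  have key2 : ∀ g : L.obj X ⟶ B,
      e.symm (c ≫ R.map (F.map (L.map (e g))) ≫ a) =
        (L.map c ≫ adj.counit.app (F.obj (L.obj X))) ≫ F.map g ≫ b := by
    intro g
    have hg : L.map (e g) ≫ adj.counit.app B = g := by
      have := e.symm_apply_apply g
      rwa [he, Adjunction.homEquiv_counit] at this
    rw [he, ha, Adjunction.homEquiv_counit]
    simp only [Functor.map_comp, Category.assoc, adj.counit_naturality,
      adj.counit_naturality_assoc]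
    rw [← F.map_comp_assoc, hg]
  have key : ∀ g : L.obj X ⟶ B,
      (g = (L.map c ≫ adj.counit.app (F.obj (L.obj X))) ≫ F.map g ≫ b) ↔
      (e g = c ≫ R.map (F.map (L.map (e g))) ≫ a) := by
    intro g
    rw [← key2 g, Equiv.eq_symm_apply]
  refine ⟨e.symm h₀, ?_, ?_⟩
  · have := (key (e.symm h₀)).mpr
    rw [Equiv.apply_symm_apply] at this
    exact this hh₀
  · intro g hg
    have := huniq (e g) ((key g).mp hg)
    rw [← this, Equiv.symm_apply_apply]
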